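/- For every n ≥ 2, Sq^{2^n} Sq^{2^n} lies in the two-sided ideal Ā(n-1) · Sq^{2^n} · Ā(n-1), where A(n-1) is the subalgebra of the mod-2 Steenrod algebra generated by Sq^1, Sq^2, …, Sq^{2^{n-1}} and Ā(n-1) is its augmentation ideal. -/

import Mathlib

open Finset

/-- The mod-2 Steenrod algebra, presented by generators `Sq^i` modulo
`Sq^0 = 1` and the Adem relations. -/
inductive SteenrodRel :
    FreeAlgebra (ZMod 2) ℕ → FreeAlgebra (ZMod 2) ℕ → Prop
  | sq_zero : SteenrodRel (FreeAlgebra.ι (ZMod 2) 0) 1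
  | adem {a b : ℕ} (h0 : 0 < a) (h : a < 2 * b) :
      SteenrodRel (FreeAlgebra.ι (ZMod 2) a * FreeAlgebra.ι (ZMod 2) b)
        (∑ i ∈ Finset.range (a / 2 + 1),
          if Nat.choose (b - 1 - i) (a - 2 * i) % 2 = 1 then
            FreeAlgebra.ι (ZMod 2) (a + b - i) * FreeAlgebra.ι (ZMod 2) i
          else 0)

/-- The mod-2 Steenrod algebra. -/
abbrev SteenrodAlgebra := RingQuot SteenrodRel

/-- The Steenrod square `Sq^i` as an element of the Steenrod algebra. -/
noncomputable def Sq (i : ℕ) : SteenrodAlgebra :=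
  RingQuot.mkAlgHom (ZMod 2) SteenrodRel (FreeAlgebra.ι (ZMod 2) i)

/-- The augmentation ideal `Ā(n-1)` of the subalgebra `A(n-1)` generated by
`Sq^1, Sq^2, …, Sq^{2^{n-1}}`: the non-unital subalgebra generated by the
`Sq^{2^j}`, `j ≤ n - 1`. -/
noncomputable def AbarIdeal (n : ℕ) : NonUnitalSubalgebra (ZMod 2) SteenrodAlgebra :=
  NonUnitalAlgebra.adjoin (ZMod 2) {y | ∃ j ≤ n - 1, y = Sq (2 ^ j)}


lemma sq_zero_eq_one : Sq 0 = 1 := by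
  have := RingQuot.mkAlgHom_rel (ZMod 2) SteenrodRel.sq_zero
  simpa [Sq] using this

lemma adem_rel {a b : ℕ} (h0 : 0 < a) (h : a < 2 * b) :
    Sq a * Sq b = ∑ i ∈ Finset.range (a / 2 + 1),
      if Nat.choose (b - 1 - i) (a - 2 * i) % 2 = 1 then Sq (a + b - i) * Sq i else 0 := by
  have := RingQuot.mkAlgHom_rel (ZMod 2) (SteenrodRel.adem h0 h)
  simp only [map_mul, map_sum, apply_ite (RingQuot.mkAlgHom (ZMod 2) SteenrodRel),
    map_zero] at this
  simpa [Sq] using this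

lemma add_self_steenrod (x : SteenrodAlgebra) : x + x = 0 := by
  have : ((2 : ZMod 2)) • x = x + x := two_smul _ x
  rw [show (2 : ZMod 2) = 0 by decide, zero_smul] at this
  exact this.symm

/-- char 2 rearrangement -/
lemma eq_add_of_add (a b c : SteenrodAlgebra) (h : a = b + c) : b = a + c := by
  rw [h, add_assoc, add_self_steenrod, add_zero]

/-- Lucas: `C(2^n - 1, k)` is odd for `k ≤ 2^n - 1`. -/
lemma choose_two_pow_sub_one_odd (n : ℕ) : ∀ k ≤ 2 ^ n - 1,
    Nat.choose (2 ^ n - 1) k % 2 = 1 := by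
  induction n with
  | zero => intro k hk; interval_cases k; decide
  | succ n ih =>
    intro k hk
    have h2 : 2 ^ (n + 1) = 2 * 2 ^ n := by ring
    have hmod : (2 ^ (n + 1) - 1) % 2 = 1 := by
      have := Nat.one_le_two_pow (n := n); omega
    have hdiv : (2 ^ (n + 1) - 1) / 2 = 2 ^ n - 1 := by
      have := Nat.one_le_two_pow (n := n); omega
    have hk2 : k / 2 ≤ 2 ^ n - 1 := by
      have := Nat.div_le_div_right (c := 2) hk
      rwa [hdiv] at this
    have key := @Choose.choose_modEq_choose_mod_mul_choose_div_nat (2 ^ (n + 1) - 1) k 2 ⟨Nat.prime_two⟩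
    have h1 : Nat.choose ((2 ^ (n + 1) - 1) % 2) (k % 2) = 1 := by
      rw [hmod]
      have : k % 2 = 0 ∨ k % 2 = 1 := by omega
      rcases this with h | h <;> simp [h]
    have key' : Nat.choose (2 ^ (n + 1) - 1) k % 2 =
        Nat.choose ((2 ^ (n + 1) - 1) % 2) (k % 2) * Nat.choose ((2 ^ (n + 1) - 1) / 2) (k / 2) % 2 := key
    rw [Nat.mul_mod, h1, hdiv] at key'
    rw [key']
    simp [Nat.mod_mod_of_dvd, ih (k / 2) hk2]

lemma sq_mem_abar (n : ℕ) : ∀ k, 0 < k → k < 2 ^ n → Sq k ∈ AbarIdeal n := by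
  intro k
  induction k using Nat.strong_induction_on with
  | _ k ih =>
    intro hk0 hkn
    set j := Nat.log 2 k with hj
    have hj1 : 2 ^ j ≤ k := Nat.pow_log_le_self 2 hk0.ne'
    have hj2 : k < 2 ^ (j + 1) := Nat.lt_pow_succ_log_self (by norm_num) k
    have hjn : j ≤ n - 1 := by
      have : 2 ^ j < 2 ^ n := lt_of_le_of_lt hj1 hkn
      have hjltn : j < n := (Nat.pow_lt_pow_iff_right (by norm_num)).mp this
      omega
    by_cases hpow : k = 2 ^ j
    · exact NonUnitalAlgebra.subset_adjoin (ZMod 2) ⟨j, hjn, by rw [hpow]⟩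
    · set m := k - 2 ^ j with hm
      have hm0 : 0 < m := by omega
      have hmj : m < 2 ^ j := by
        have : 2 ^ (j + 1) = 2 * 2 ^ j := by ring
        omega
      have hadem := adem_rel hm0 (lt_of_lt_of_le hmj (by omega) : m < 2 * 2 ^ j)
      rw [Finset.sum_range_succ'] at hadem
      have hcoef : Nat.choose (2 ^ j - 1 - 0) (m - 2 * 0) % 2 = 1 := by
        simpa using choose_two_pow_sub_one_odd j m (by omega)
      rw [if_pos hcoef] at hadem
      have hidx : m + 2 ^ j - 0 = k := by omega
      rw [hidx, sq_zero_eq_one, mul_one] at hadem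
      -- hadem : Sq m * Sq (2^j) = ∑ i in range (m/2), f (i+1) + Sq k
      have hk_eq : Sq k = Sq m * Sq (2 ^ j) +
          ∑ i ∈ Finset.range (m / 2), (if Nat.choose (2 ^ j - 1 - (i + 1)) (m - 2 * (i + 1)) % 2 = 1
            then Sq (m + 2 ^ j - (i + 1)) * Sq (i + 1) else 0) := by
        apply eq_add_of_add _ _ _ ?_
        rw [hadem, add_comm]
      rw [hk_eq]
      have hsqj : Sq (2 ^ j) ∈ AbarIdeal n := NonUnitalAlgebra.subset_adjoin (ZMod 2) ⟨j, hjn, rfl⟩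
      have hmmem : Sq m ∈ AbarIdeal n := ih m (by omega) hm0 (by omega)
      refine add_mem (mul_mem hmmem hsqj) (sum_mem ?_)
      intro i hi
      rw [Finset.mem_range] at hi
      split_ifs with hc
      · have hip : i + 1 < k := by omega
        have hlo : 0 < m + 2 ^ j - (i + 1) := by omega
        have hlt : m + 2 ^ j - (i + 1) < k := by omega
        exact mul_mem (ih _ hlt hlo (by omega)) (ih _ hip (by omega) (by omega))
      · exact zero_mem _

/-- generators of the left-closure `Ā·Sq^{2^n}·(Ā + k)` -/
def Sgen (n : ℕ) : Set SteenrodAlgebra :=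
  {x | ∃ a ∈ AbarIdeal n, x = a * Sq (2 ^ n) ∨ ∃ b ∈ AbarIdeal n, x = a * Sq (2 ^ n) * b}

def Tgen (n : ℕ) : Set SteenrodAlgebra :=
  {x | ∃ a ∈ AbarIdeal n, ∃ b ∈ AbarIdeal n, x = a * Sq (2 ^ n) * b}

lemma Tgen_subset_Sgen (n : ℕ) : Tgen n ⊆ Sgen n := by
  rintro x ⟨a, ha, b, hb, rfl⟩
  exact ⟨a, ha, Or.inr ⟨b, hb, rfl⟩⟩

lemma mul_sq_mem (n i : ℕ) (hi0 : 0 < i) (hin : i < 2 ^ n) {x : SteenrodAlgebra}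
    (hx : x ∈ AddSubgroup.closure (Sgen n)) :
    x * Sq i ∈ AddSubgroup.closure (Tgen n) := by
  induction hx using AddSubgroup.closure_induction with
  | mem y hy =>
    obtain ⟨a, ha, hy | ⟨b, hb, hy⟩⟩ := hy
    · subst hy
      exact AddSubgroup.subset_closure ⟨a, ha, Sq i, sq_mem_abar n i hi0 hin, rfl⟩
    · subst hy
      rw [mul_assoc, mul_assoc]
      exact AddSubgroup.subset_closure ⟨a, ha, b * Sq i,
        mul_mem hb (sq_mem_abar n i hi0 hin), by rw [mul_assoc]⟩
  | zero => rw [zero_mul]; exact zero_mem _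
  | add y z _ _ hy hz => rw [add_mul]; exact add_mem hy hz
  | neg y _ hy => rw [show -y * Sq i = -(y * Sq i) from neg_mul y (Sq i)]; exact neg_mem hy

lemma sq_add_mem (n : ℕ) : ∀ h, 0 < h → h < 2 ^ n →
    Sq (2 ^ n + h) ∈ AddSubgroup.closure (Sgen n) := by
  intro h
  induction h using Nat.strong_induction_on with
  | _ h ih =>
    intro hh0 hhn
    have hadem := adem_rel hh0 (by omega : h < 2 * 2 ^ n)
    rw [Finset.sum_range_succ'] at hadem
    have hcoef : Nat.choose (2 ^ n - 1 - 0) (h - 2 * 0) % 2 = 1 := by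
      simpa using choose_two_pow_sub_one_odd n h (by omega)
    rw [if_pos hcoef] at hadem
    have hidx : h + 2 ^ n - 0 = 2 ^ n + h := by omega
    rw [hidx, sq_zero_eq_one, mul_one] at hadem
    have heq : Sq (2 ^ n + h) = Sq h * Sq (2 ^ n) +
        ∑ i ∈ Finset.range (h / 2),
          (if Nat.choose (2 ^ n - 1 - (i + 1)) (h - 2 * (i + 1)) % 2 = 1
            then Sq (h + 2 ^ n - (i + 1)) * Sq (i + 1) else 0) := by
      apply eq_add_of_add _ _ _ ?_
      rw [hadem, add_comm]
    rw [heq]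
    refine add_mem (AddSubgroup.subset_closure ⟨Sq h, sq_mem_abar n h hh0 hhn, Or.inl rfl⟩)
      (AddSubgroup.sum_mem _ ?_)
    intro i hi
    rw [Finset.mem_range] at hi
    split_ifs with hc
    · have hidx2 : h + 2 ^ n - (i + 1) = 2 ^ n + (h - (i + 1)) := by omega
      rw [hidx2]
      have hmem := ih (h - (i + 1)) (by omega) (by omega) (by omega)
      exact AddSubgroup.closure_mono (Tgen_subset_Sgen n)
        (mul_sq_mem n (i + 1) (by omega) (by omega) hmem)
    · exact zero_mem _

/-- Lemma 5.7.  For every `n ≥ 2`,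
`Sq^{2^n} Sq^{2^n} ∈ Ā(n-1) · Sq^{2^n} · Ā(n-1)`. -/
theorem sq_sq_mem_abar_sq_abar (n : ℕ) (hn : 2 ≤ n) :
    Sq (2 ^ n) * Sq (2 ^ n) ∈
      AddSubgroup.closure
        {x : SteenrodAlgebra |
          ∃ a ∈ AbarIdeal n, ∃ b ∈ AbarIdeal n, x = a * Sq (2 ^ n) * b} := by
  have hN : 0 < 2 ^ n := Nat.pow_pos (by norm_num)
  have e : 2 ^ n = 2 * 2 ^ (n - 1) := by
    rcases n with _ | m
    · omega
    · simp [pow_succ, mul_comm]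
  rw [adem_rel hN (by omega : 2 ^ n < 2 * 2 ^ n)]
  apply AddSubgroup.sum_mem
  intro i hi
  rw [Finset.mem_range] at hi
  split_ifs with hc
  · rcases Nat.eq_zero_or_pos i with rfl | hi0
    · exfalso
      rw [Nat.choose_eq_zero_of_lt (by omega)] at hc
      simp at hc
    · have hidx : 2 ^ n + 2 ^ n - i = 2 ^ n + (2 ^ n - i) := by omega
      rw [hidx]
      have hmem := sq_add_mem n (2 ^ n - i) (by omega) (by omega)
      exact mul_sq_mem n i hi0 (by omega) hmem
  · exact zero_mem _
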